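/- For n ≥ 2(m+1), the Grundy domination number of the m-th power of the n-cycle satisfies γ_gr(C_n^m) = n − 2m. -/

import Mathlib

namespace GrundyDom

/-- Closed neighborhood N[v]. -/
def cn {V : Type*} (G : SimpleGraph V) (v : V) : Set V := insert v (G.neighborSet v)

/-- Union of closed neighborhoods of the vertices of a list. -/
def cnUnion {V : Type*} (G : SimpleGraph V) (L : List V) : Set V := ⋃ v ∈ L, cn G v

/-- Private neighborhood of `v` with respect to the first `i` entries of `S`:
`N[v] \ (N[v_1] ∪ ... ∪ N[v_i])`. -/
def PN {V : Type*} (G : SimpleGraph V) (S : List V) (i : ℕ) (v : V) : Set V :=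
  cn G v \ cnUnion G (S.take i)

/-- A legal dominating sequence: distinct vertices, dominating set, and every
vertex of the sequence has a nonempty private neighborhood w.r.t. its predecessors. -/
structure IsLegal {V : Type*} (G : SimpleGraph V) (S : List V) : Prop where
  nodup : S.Nodup
  dominates : ∀ v : V, ∃ u ∈ S, v ∈ cn G u
  legal : ∀ i : Fin S.length, (PN G S i.val (S.get i)).Nonempty

/-- The set `I_S` of vertices that footprint themselves in `S`. -/
def selfFoot {V : Type*} (G : SimpleGraph V) (S : List V) : Set V :=
  {v | ∃ i : Fin S.length, S.get i = v ∧ v ∈ PN G S i.val v}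

/-- Grundy domination number: maximum length of a legal dominating sequence. -/
noncomputable def gammaGr {V : Type*} (G : SimpleGraph V) : ℕ :=
  sSup {k | ∃ S : List V, IsLegal G S ∧ S.length = k}

/-- `γ_gr(G, I)`: maximum length of a legal dominating sequence `S` with `I_S = I`. -/
noncomputable def gammaGrOn {V : Type*} (G : SimpleGraph V) (I : Set V) : ℕ :=
  sSup {k | ∃ S : List V, IsLegal G S ∧ selfFoot G S = I ∧ S.length = k}

/-- `γ_gr^u(G)`: maximum of `γ_gr(G, I)` over independent sets `I` containing `u`. -/
noncomputable def gammaGrVert {V : Type*} (G : SimpleGraph V) (u : V) : ℕ :=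
  sSup {k | ∃ I : Set V, (∀ ⦃a⦄, a ∈ I → ∀ ⦃b⦄, b ∈ I → a ≠ b → ¬ G.Adj a b) ∧
    u ∈ I ∧ k = gammaGrOn G I}

/-- Independent set of a graph. -/
def IsIndep {V : Type*} (G : SimpleGraph V) (I : Set V) : Prop :=
  ∀ ⦃u⦄, u ∈ I → ∀ ⦃v⦄, v ∈ I → u ≠ v → ¬ G.Adj u v

/-- The X-join product `G ↩ 𝓡`: replace each vertex `v` of `G` by the graph `R v`. -/
def XJoin {V : Type*} (G : SimpleGraph V) {W : V → Type*} (R : ∀ v, SimpleGraph (W v)) :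
    SimpleGraph (Σ v, W v) where
  Adj x y := G.Adj x.1 y.1 ∨ ∃ h : x.1 = y.1, (R y.1).Adj (h ▸ x.2) y.2
  symm := by
    constructor
    rintro ⟨a, xa⟩ ⟨b, yb⟩ (h | ⟨h, hadj⟩)
    · exact Or.inl h.symm
    · dsimp at h hadj
      subst h
      exact Or.inr ⟨rfl, (R a).symm.symm _ _ hadj⟩
  loopless := by
    constructor
    rintro ⟨a, xa⟩ (h | ⟨h, hadj⟩)
    · exact G.loopless.irrefl a h
    · exact (R a).loopless.irrefl xa hadj

/-- The lexicographic product `G ∘ H`. -/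
def Lex {V W : Type*} (G : SimpleGraph V) (H : SimpleGraph W) : SimpleGraph (V × W) where
  Adj x y := G.Adj x.1 y.1 ∨ (x.1 = y.1 ∧ H.Adj x.2 y.2)
  symm := by
    constructor
    rintro x y (h | ⟨h1, h2⟩)
    · exact Or.inl h.symm
    · exact Or.inr ⟨h1.symm, h2.symm⟩
  loopless := by
    constructor
    rintro x (h | ⟨_, h⟩)
    · exact G.loopless.irrefl _ h
    · exact H.loopless.irrefl _ h

/-- The replacement graph `G_{u ↩ H}`: replace the vertex `u` of `G` by `H`. -/
def Replace {V : Type*} (G : SimpleGraph V) (u : V) {W : Type*} (H : SimpleGraph W) :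
    SimpleGraph ({v : V // v ≠ u} ⊕ W) where
  Adj x y :=
    match x, y with
    | Sum.inl a, Sum.inl b => G.Adj a.1 b.1
    | Sum.inl a, Sum.inr _ => G.Adj a.1 u
    | Sum.inr _, Sum.inl b => G.Adj u b.1
    | Sum.inr h1, Sum.inr h2 => H.Adj h1 h2
  symm := ⟨by rintro (a|a) (b|b) h <;> exact h.symm⟩
  loopless := ⟨by rintro (a|a) h <;> exact h.ne rfl⟩

/-- `C_n^m`: the m-th power of the n-cycle, on vertex set `ZMod n`;
two vertices are adjacent iff their circular distance is between 1 and m. -/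
def cyclePow (n m : ℕ) : SimpleGraph (ZMod n) where
  Adj i j := i ≠ j ∧ ∃ k : ℕ, 1 ≤ k ∧ k ≤ m ∧ (j = i + k ∨ i = j + k)
  symm := by
    constructor
    rintro i j ⟨hne, k, h1, h2, h3⟩
    exact ⟨hne.symm, k, h1, h2, h3.symm⟩
  loopless := ⟨fun i h => h.1 rfl⟩

/-- `P_n^m`: the m-th power of the n-path, on vertex set `Fin n`
(vertex `i` represents the `(i+1)`-st vertex of the path);
two vertices adjacent iff their distance is between 1 and m. -/
def pathPow (n m : ℕ) : SimpleGraph (Fin n) where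
  Adj i j := i ≠ j ∧ Nat.dist i.val j.val ≤ m
  symm := by
    constructor
    rintro i j ⟨hne, hd⟩
    exact ⟨hne.symm, by rwa [Nat.dist_comm]⟩
  loopless := ⟨fun i h => h.1 rfl⟩

-- Auxiliary lemmas
lemma mem_cnUnion {V : Type*} {G : SimpleGraph V} {L : List V} {v : V} :
    v ∈ cnUnion G L ↔ ∃ u ∈ L, v ∈ cn G u := by simp [cnUnion]

lemma mem_cn_iff {n m : ℕ} {v u : ZMod n} :
    u ∈ cn (cyclePow n m) v ↔ ∃ k : ℕ, k ≤ m ∧ (u = v + k ∨ v = u + k) := by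
  constructor
  · rintro (rfl | ⟨hne, k, h1, h2, h3⟩ : u = v ∨ (v ≠ u ∧ ∃ k : ℕ, 1 ≤ k ∧ k ≤ m ∧ (u = v + k ∨ v = u + k)))
    · exact ⟨0, Nat.zero_le _, Or.inl (by simp)⟩
    · exact ⟨k, h2, h3⟩
  · rintro ⟨k, hk, h⟩
    by_cases hu : u = v
    · exact hu ▸ Set.mem_insert _ _
    · refine Set.mem_insert_iff.2 (Or.inr ?_)
      have hk1 : 1 ≤ k := by
        rcases Nat.eq_zero_or_pos k with rfl | h'
        · simp only [Nat.cast_zero, add_zero] at h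
          rcases h with h | h
          · exact absurd h hu
          · exact absurd h.symm hu
        · exact h'
      exact (⟨fun hvu => hu hvu.symm, k, hk1, hk, h⟩ : v ≠ u ∧ ∃ k : ℕ, 1 ≤ k ∧ k ≤ m ∧ (u = v + k ∨ v = u + k))

lemma cast_inj_of_lt {n a b : ℕ} (ha : a < n) (hb : b < n)
    (h : (a : ZMod n) = b) : a = b := by
  haveI : NeZero n := ⟨by omega⟩
  have := congrArg ZMod.val h
  rwa [ZMod.val_cast_of_lt ha, ZMod.val_cast_of_lt hb] at this

end GrundyDom

namespace GrundyDom

lemma upper_bound {n m : ℕ} (hm : 1 ≤ m) (hn : 2 * (m + 1) ≤ n)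
    {S : List (ZMod n)} (hS : IsLegal (cyclePow n m) S) : S.length ≤ n - 2 * m := by
  haveI : NeZero n := ⟨by omega⟩
  rcases Nat.eq_zero_or_pos S.length with hk0 | hk1
  · omega
  set v0 := S.get ⟨0, hk1⟩ with hv0
  set E : Fin (2*m+1) → ZMod n := fun j => v0 + (j.val : ZMod n) - (m : ZMod n) with hE
  have hEmem : ∀ j, E j ∈ cn (cyclePow n m) v0 := by
    intro j
    rcases le_or_gt m j.val with h | h
    · refine mem_cn_iff.2 ⟨j.val - m, by omega, Or.inl ?_⟩
      rw [Nat.cast_sub h]; simp only [hE]; ring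
    · refine mem_cn_iff.2 ⟨m - j.val, by omega, Or.inr ?_⟩
      rw [Nat.cast_sub h.le]; simp only [hE]; ring
  have hEinj : Function.Injective E := by
    intro j j' h
    simp only [hE] at h
    rw [sub_left_inj, add_right_inj] at h
    exact Fin.ext (cast_inj_of_lt (by omega) (by omega) h)
  set F : Fin S.length → ZMod n := fun i => (hS.legal i).choose with hF
  have hFspec : ∀ i, F i ∈ cn (cyclePow n m) (S.get i) ∧
      F i ∉ cnUnion (cyclePow n m) (S.take i.val) := fun i => (hS.legal i).choose_spec
  have hgetmem : ∀ (i j : Fin S.length), i.val < j.val → S.get i ∈ S.take j.val := by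
    intro i j hij
    have h1 : i.val < (S.take j.val).length := by
      simp [List.length_take]; omega
    have h2 : (S.take j.val)[i.val]'h1 = S.get i := by
      rw [List.get_eq_getElem]
      exact List.getElem_take ..
    exact h2 ▸ List.getElem_mem h1
  have hFinj : Function.Injective F := by
    intro i j h
    by_contra hne
    rcases Ne.lt_or_gt (fun h' : i.val = j.val => hne (Fin.ext h')) with hij | hij
    · exact (hFspec j).2 (mem_cnUnion.2 ⟨S.get i, hgetmem i j hij, h ▸ (hFspec i).1⟩)
    · exact (hFspec i).2 (mem_cnUnion.2 ⟨S.get j, hgetmem j i hij, h ▸ (hFspec j).1⟩)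
  have hFnot : ∀ i : Fin S.length, 0 < i.val → F i ∉ cn (cyclePow n m) v0 := by
    intro i hi hmem
    exact (hFspec i).2 (mem_cnUnion.2 ⟨v0, hgetmem ⟨0, hk1⟩ i hi, hmem⟩)
  classical
  set A : Finset (ZMod n) := Finset.image E Finset.univ with hA
  set B : Finset (ZMod n) := Finset.image F Finset.univ with hB
  have hcardA : A.card = 2*m+1 := by
    rw [hA, Finset.card_image_of_injective _ hEinj, Finset.card_univ, Fintype.card_fin]
  have hcardB : B.card = S.length := by
    rw [hB, Finset.card_image_of_injective _ hFinj, Finset.card_univ, Fintype.card_fin]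
  have hinter : B ∩ A ⊆ {F ⟨0, hk1⟩} := by
    intro x hx
    rcases Finset.mem_inter.1 hx with ⟨hxB, hxA⟩
    rcases Finset.mem_image.1 hxB with ⟨i, _, rfl⟩
    rcases Finset.mem_image.1 hxA with ⟨j, _, hj⟩
    have hxcn : F i ∈ cn (cyclePow n m) v0 := hj ▸ hEmem j
    have : i = ⟨0, hk1⟩ := by
      by_contra hne
      exact hFnot i (Nat.pos_of_ne_zero fun h0 => hne (Fin.ext h0)) hxcn
    simp [this]
  have h1 : (B ∩ A).card ≤ 1 := le_trans (Finset.card_le_card hinter) (by simp)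
  have h2 : (B ∩ A).card + (B \ A).card = B.card := Finset.card_inter_add_card_sdiff B A
  have h3 : (B \ A).card + A.card = (B ∪ A).card := (Finset.card_sdiff_add_card B A)
  have h4 : (B ∪ A).card ≤ n := by
    have := Finset.card_le_univ (B ∪ A)
    rwa [ZMod.card] at this
  omega

end GrundyDom

namespace GrundyDom

lemma lower_bound {n m : ℕ} (hm : 1 ≤ m) (hn : 2 * (m + 1) ≤ n) :
    ∃ S : List (ZMod n), IsLegal (cyclePow n m) S ∧ S.length = n - 2 * m := by
  haveI : NeZero n := ⟨by omega⟩
  set N := n - 2*m with hNdef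
  have hN2 : 2 ≤ N := by omega
  set S : List (ZMod n) := (List.range N).map (fun a : ℕ => (a : ZMod n)) with hSdef
  have hlen : S.length = N := by simp [hSdef]
  have hget : ∀ (i : ℕ) (h : i < S.length), S[i] = (i : ZMod n) := by
    intro i h
    simp [hSdef]
  refine ⟨S, ⟨?_, ?_, ?_⟩, hlen⟩
  · refine List.Nodup.map_on ?_ List.nodup_range
    intro a ha b hb hab
    rw [List.mem_range] at ha hb
    exact cast_inj_of_lt (by omega) (by omega) hab
  · intro v
    obtain ⟨w, hw, rfl⟩ : ∃ w : ℕ, w < n ∧ (w : ZMod n) = v :=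
      ⟨v.val, ZMod.val_lt v, ZMod.natCast_rightInverse v⟩
    rcases le_or_gt w m with h1 | h1
    · refine ⟨((0:ℕ) : ZMod n), ?_, mem_cn_iff.2 ⟨w, h1, Or.inl ?_⟩⟩
      · simp [hSdef]; exact ⟨0, by omega, by simp⟩
      · rw [Nat.cast_zero, zero_add]
    rcases lt_or_ge (w + m) n with h2 | h2
    · refine ⟨((w - m : ℕ) : ZMod n), ?_, mem_cn_iff.2 ⟨m, le_rfl, Or.inl ?_⟩⟩
      · simp [hSdef]; exact ⟨w - m, by omega, by simp⟩
      · rw [← Nat.cast_add, Nat.sub_add_cancel h1.le]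
    · refine ⟨((0:ℕ) : ZMod n), ?_, mem_cn_iff.2 ⟨n - w, by omega, Or.inr ?_⟩⟩
      · simp [hSdef]; exact ⟨0, by omega, by simp⟩
      · rw [Nat.cast_zero, ← Nat.cast_add, Nat.add_sub_cancel' hw.le, ZMod.natCast_self]
  · intro i
    have hiN : i.val < N := by rw [← hlen]; exact i.isLt
    have hgeti : S.get i = (i.val : ZMod n) := hget i.val i.isLt
    refine ⟨((i.val + m : ℕ) : ZMod n), ?_, ?_⟩
    · rw [hgeti]
      exact mem_cn_iff.2 ⟨m, le_rfl, Or.inl (by rw [Nat.cast_add])⟩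
    · intro hmem
      rcases mem_cnUnion.1 hmem with ⟨u, hu, hucn⟩
      rcases List.mem_iff_getElem.1 hu with ⟨j, hj, rfl⟩
      have hjlt : j < i.val := by
        simp [List.length_take] at hj; omega
      have hju : (S.take i.val)[j] = (j : ZMod n) := by
        rw [(List.getElem_take .. : (S.take i.val)[j] = S[j]'(by rw [hlen]; omega))]
        exact hget j (by rw [hlen]; omega)
      rw [hju] at hucn
      rcases mem_cn_iff.1 hucn with ⟨k, hk, h | h⟩
      · rw [← Nat.cast_add] at h
        have := cast_inj_of_lt (by omega) (by omega) h
        omega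
      · rw [← Nat.cast_add] at h
        have := cast_inj_of_lt (by omega) (by omega) h
        omega

end GrundyDom

open GrundyDom Finset

/-- `γ_gr(C_n^m) = n - 2m` for `n ≥ 2(m+1)`. -/
theorem stmt9 (n m : ℕ) (hm : 1 ≤ m) (hn : 2 * (m + 1) ≤ n) :
    (gammaGr (cyclePow n m) : ℤ) = (n : ℤ) - 2 * m := by
  have key : gammaGr (cyclePow n m) = n - 2 * m := by
    have hgr : IsGreatest
        {k | ∃ S : List (ZMod n), IsLegal (cyclePow n m) S ∧ S.length = k} (n - 2 * m) :=
      ⟨lower_bound hm hn, by rintro k ⟨S, hS, rfl⟩; exact upper_bound hm hn hS⟩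
    exact hgr.csSup_eq
  rw [key, Nat.cast_sub (by omega : 2 * m ≤ n)]
  push_cast; ring
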